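/- (Bound (3.10)) Under the assumptions of Lemma th3.1 (Algorithm 1 conditions (i)–(iii) at every iteration, (τ_k), (λ_k) nondecreasing positive, R − τ_kλ_kS⁻¹ positive definite for every k, and (x*, y*) a saddle point of L), for every N ≥ 1 and every k with 0 ≤ k ≤ N: ‖y* − ȳᵏ‖_S ≤ 2A_N + √(τ_N/τ_0)·‖y* − ȳ⁰‖_S + √(τ_N/λ_0)·‖x* − x⁰‖_{AᵀRA} + √(2B_N), where A_N = τ_N·Σ_{k=0}^{N−1} √(ε_{k+1}/τ_k) and B_N = τ_N·Σ_{k=0}^{N−1} (2ε_{k+1} + δ_{k+1}). -/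

import Mathlib

open Matrix Finset Filter

/-- squared M-norm: ⟨x, M x⟩ -/
noncomputable def sqnorm {d : ℕ} (M : Matrix (Fin d) (Fin d) ℝ) (x : Fin d → ℝ) : ℝ :=
  x ⬝ᵥ M.mulVec x

/-- M-norm: √⟨x, M x⟩ -/
noncomputable def mnorm {d : ℕ} (M : Matrix (Fin d) (Fin d) ℝ) (x : Fin d → ℝ) : ℝ :=
  Real.sqrt (x ⬝ᵥ M.mulVec x)

/-- The Lagrangian L(x,y) = f(x) + ⟨Ax, y⟩ − g(y). -/
noncomputable def Lag {n m : ℕ} (f : (Fin n → ℝ) → ℝ) (g : (Fin m → ℝ) → ℝ)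
    (A : Matrix (Fin m) (Fin n) ℝ) (x : Fin n → ℝ) (y : Fin m → ℝ) : ℝ :=
  f x + A.mulVec x ⬝ᵥ y - g y

/-- (x*, y*) is a saddle point of L. -/
def IsSaddle {n m : ℕ} (f : (Fin n → ℝ) → ℝ) (g : (Fin m → ℝ) → ℝ)
    (A : Matrix (Fin m) (Fin n) ℝ) (xs : Fin n → ℝ) (ys : Fin m → ℝ) : Prop :=
  ∀ (x : Fin n → ℝ) (y : Fin m → ℝ),
    Lag f g A xs y ≤ Lag f g A xs ys ∧ Lag f g A xs ys ≤ Lag f g A x ys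

lemma mnorm_eq' {d : ℕ} (M : Matrix (Fin d) (Fin d) ℝ) (x : Fin d → ℝ) :
    mnorm M x = Real.sqrt (sqnorm M x) := rfl

lemma sqrt_add_le' {a b : ℝ} (ha : 0 ≤ a) (hb : 0 ≤ b) :
    Real.sqrt (a + b) ≤ Real.sqrt a + Real.sqrt b := by
  rw [← Real.sqrt_sq (by positivity : (0:ℝ) ≤ Real.sqrt a + Real.sqrt b)]
  apply Real.sqrt_le_sqrt
  nlinarith [Real.sq_sqrt ha, Real.sq_sqrt hb, Real.sqrt_nonneg a, Real.sqrt_nonneg b]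

lemma sdot_comm' {d : ℕ} {S : Matrix (Fin d) (Fin d) ℝ} (hSt : Sᵀ = S) (u v : Fin d → ℝ) :
    u ⬝ᵥ S.mulVec v = v ⬝ᵥ S.mulVec u := by
  rw [dotProduct_mulVec, dotProduct_comm, ← mulVec_transpose, hSt]

lemma traa' {d n : ℕ} (A : Matrix (Fin d) (Fin n) ℝ) (R : Matrix (Fin d) (Fin d) ℝ)
    (v z : Fin n → ℝ) :
    (Aᵀ * R * A).mulVec v ⬝ᵥ z = (A.mulVec z) ⬝ᵥ R.mulVec (A.mulVec v) := by
  rw [← mulVec_mulVec, ← mulVec_mulVec, mulVec_transpose, ← dotProduct_mulVec,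
    dotProduct_comm]

lemma amgm' {d : ℕ} {S R : Matrix (Fin d) (Fin d) ℝ} (hS : S.PosDef)
    {τ lam : ℝ} (hτ : 0 < τ) (hlam : 0 < lam)
    (hPD : (R - (τ * lam) • S⁻¹).PosDef) (u v : Fin d → ℝ) :
    u ⬝ᵥ v ≤ 1 / (2 * lam) * (u ⬝ᵥ R.mulVec u) + 1 / (2 * τ) * (v ⬝ᵥ S.mulVec v) := by
  have hSt : Sᵀ = S := hS.1
  have hdet : IsUnit S.det := isUnit_iff_ne_zero.mpr hS.det_pos.ne'
  have hSinv : S * S⁻¹ = 1 := mul_nonsing_inv S hdet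
  have hSit : (S⁻¹)ᵀ = S⁻¹ := by rw [transpose_nonsing_inv, hSt]
  set q : ℝ := u ⬝ᵥ S⁻¹.mulVec u with hq
  have hpsd : (0:ℝ) ≤ (v - τ • S⁻¹.mulVec u) ⬝ᵥ S.mulVec (v - τ • S⁻¹.mulVec u) :=
    hS.posSemidef.dotProduct_mulVec_nonneg _
  have hcol : S.mulVec (S⁻¹.mulVec u) = u := by
    rw [mulVec_mulVec, hSinv, one_mulVec]
  have hcross : (S⁻¹.mulVec u) ⬝ᵥ S.mulVec v = u ⬝ᵥ v := by
    rw [sdot_comm' hSt, hcol, dotProduct_comm]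
  have hqq : (S⁻¹.mulVec u) ⬝ᵥ S.mulVec (S⁻¹.mulVec u) = q := by
    rw [hcol, dotProduct_comm, ← sdot_comm' hSit]
  have hexp : (v - τ • S⁻¹.mulVec u) ⬝ᵥ S.mulVec (v - τ • S⁻¹.mulVec u)
      = v ⬝ᵥ S.mulVec v - 2 * τ * (u ⬝ᵥ v) + τ ^ 2 * q := by
    rw [mulVec_sub, mulVec_smul, dotProduct_sub, sub_dotProduct, sub_dotProduct,
      dotProduct_smul, dotProduct_smul, smul_dotProduct, smul_dotProduct,
      hcross, hqq, hcol, dotProduct_comm v u]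
    simp only [smul_eq_mul]; ring
  have key1 : 2 * τ * (u ⬝ᵥ v) ≤ v ⬝ᵥ S.mulVec v + τ ^ 2 * q := by
    rw [hexp] at hpsd; linarith
  have hpsd2 : (0:ℝ) ≤ u ⬝ᵥ (R - (τ * lam) • S⁻¹).mulVec u := hPD.posSemidef.dotProduct_mulVec_nonneg u
  have hexp2 : u ⬝ᵥ (R - (τ * lam) • S⁻¹).mulVec u
      = u ⬝ᵥ R.mulVec u - τ * lam * q := by
    rw [sub_mulVec, dotProduct_sub, smul_mulVec, dotProduct_smul]
    simp only [smul_eq_mul]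
    rfl
  have key2 : τ * lam * q ≤ u ⬝ᵥ R.mulVec u := by rw [hexp2] at hpsd2; linarith
  have h2τ : (0:ℝ) < 2 * τ := by linarith
  have hqr : τ ^ 2 * q ≤ τ / lam * (u ⬝ᵥ R.mulVec u) := by
    have h := mul_le_mul_of_nonneg_left key2 (le_of_lt (div_pos hτ hlam))
    calc τ ^ 2 * q = τ / lam * (τ * lam * q) := by field_simp
    _ ≤ τ / lam * (u ⬝ᵥ R.mulVec u) := h
  have hfin : 2 * τ * (u ⬝ᵥ v) ≤ v ⬝ᵥ S.mulVec v + τ / lam * (u ⬝ᵥ R.mulVec u) := by linarith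
  have h0 : (0:ℝ) ≤ (v ⬝ᵥ S.mulVec v + τ / lam * (u ⬝ᵥ R.mulVec u) - 2 * τ * (u ⬝ᵥ v)) / (2 * τ) :=
    div_nonneg (by linarith) h2τ.le
  have heq : (v ⬝ᵥ S.mulVec v + τ / lam * (u ⬝ᵥ R.mulVec u) - 2 * τ * (u ⬝ᵥ v)) / (2 * τ)
      = 1 / (2 * lam) * (u ⬝ᵥ R.mulVec u) + 1 / (2 * τ) * (v ⬝ᵥ S.mulVec v) - u ⬝ᵥ v := by
    field_simp
    ring
  rw [heq] at h0
  linarith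

set_option maxHeartbeats 1000000 in
lemma strong_min' {d : ℕ} {g : (Fin d → ℝ) → ℝ} (hg : ConvexOn ℝ Set.univ g)
    {S : Matrix (Fin d) (Fin d) ℝ} (hSt : Sᵀ = S) (hSpsd : ∀ x, 0 ≤ x ⬝ᵥ S.mulVec x)
    {τ ε : ℝ} (hτ : 0 < τ) (hε : 0 ≤ ε) (c b z w : Fin d → ℝ)
    (h : ∀ y, g y - c ⬝ᵥ y + 1 / (2*τ) * sqnorm S (y - b)
        ≥ g z - c ⬝ᵥ z + 1 / (2*τ) * sqnorm S (z - b) - ε/2) :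
    g w - c ⬝ᵥ w + 1 / (2*τ) * sqnorm S (w - b)
      ≥ g z - c ⬝ᵥ z + 1 / (2*τ) * sqnorm S (z - b)
        + 1 / (2*τ) * sqnorm S (w - z) - ε/2 - Real.sqrt (ε/τ) * mnorm S (w - z) := by
  have hsq0' : 0 ≤ sqnorm S (w - z) := hSpsd _
  have husq' : (mnorm S (w - z)) ^ 2 = sqnorm S (w - z) := Real.sq_sqrt hsq0'
  set sq : ℝ := sqnorm S (w - z) with hsqdef
  set u : ℝ := mnorm S (w - z) with hudef
  set D : ℝ := (z - b) ⬝ᵥ S.mulVec (w - z) with hDdef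
  set r : ℝ := Real.sqrt (ε/τ) with hrdef
  have hsq0 : 0 ≤ sq := hsq0'
  have hu0 : 0 ≤ u := Real.sqrt_nonneg _
  have husq : u ^ 2 = sq := husq'
  have hr0 : 0 ≤ r := Real.sqrt_nonneg _
  have hDflip : (w - z) ⬝ᵥ S.mulVec (z - b) = D := sdot_comm' hSt _ _
  have quad2 : sqnorm S (w - b) = sqnorm S (z - b) + 2 * D + sq := by
    have hw : w - b = (z - b) + (w - z) := by
      funext i; simp only [Pi.add_apply, Pi.sub_apply]; ring
    rw [hsqdef, hDdef, sqnorm, sqnorm, sqnorm, hw, mulVec_add, dotProduct_add,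
      add_dotProduct, add_dotProduct, hDflip, hDdef]
    ring
  have H : ∀ t : ℝ, 0 < t → t ≤ 1 →
      t * ((g w - c ⬝ᵥ w) - (g z - c ⬝ᵥ z)) ≥ - ε/2 - (2*t*D + t^2*sq) / (2*τ) := by
    intro t ht0 ht1
    have hyt : z + t • (w - z) = (1 - t) • z + t • w := by
      funext i
      simp only [Pi.add_apply, Pi.smul_apply, Pi.sub_apply, smul_eq_mul]
      ring
    have gcomb : g (z + t • (w - z)) ≤ (1 - t) * g z + t * g w := by
      rw [hyt]
      have h2 := hg.2 (Set.mem_univ z) (Set.mem_univ w)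
        (show (0:ℝ) ≤ 1 - t by linarith) (show (0:ℝ) ≤ t from ht0.le)
        (show (1 - t) + t = 1 by ring)
      simpa only [smul_eq_mul] using h2
    have clin : c ⬝ᵥ (z + t • (w - z)) = c ⬝ᵥ z + t * (c ⬝ᵥ w) - t * (c ⬝ᵥ z) := by
      rw [dotProduct_add, dotProduct_smul, dotProduct_sub]
      simp only [smul_eq_mul]; ring
    have quadt : sqnorm S (z + t • (w - z) - b)
        = sqnorm S (z - b) + 2*t*D + t^2*sq := by
      have hv : z + t • (w - z) - b = (z - b) + t • (w - z) := by
        funext i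
        simp only [Pi.add_apply, Pi.sub_apply, Pi.smul_apply, smul_eq_mul]
        ring
      rw [hsqdef, hDdef, sqnorm, sqnorm, sqnorm, hv]
      simp only [mulVec_add, mulVec_smul, dotProduct_add, add_dotProduct,
        dotProduct_smul, smul_dotProduct, smul_eq_mul, hDflip, hDdef]
      ring
    have hy := h (z + t • (w - z))
    rw [quadt, clin] at hy
    have hexp : 1 / (2*τ) * (sqnorm S (z - b) + 2*t*D + t^2*sq)
        = 1 / (2*τ) * sqnorm S (z - b) + (2*t*D + t^2*sq) / (2*τ) := by
      field_simp; ring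
    rw [hexp] at hy
    nlinarith [gcomb, hy]
  clear_value sq u D r
  rw [quad2, ge_iff_le, ← sub_nonneg]
  have hbridge : 1 / (2*τ) * (sqnorm S (z - b) + 2*D + sq) - 1 / (2*τ) * sqnorm S (z - b)
      - 1 / (2*τ) * sq = D / τ := by field_simp; ring
  have hmain : - D/τ - ε/2 - r*u ≤ (g w - c ⬝ᵥ w) - (g z - c ⬝ᵥ z) := by
    by_cases hcase : sq ≤ τ * ε
    · have h1 := H 1 one_pos le_rfl
      have hdiv : (2*1*D + 1^2*sq) / (2*τ) = D/τ + sq/(2*τ) := by field_simp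
      rw [hdiv] at h1
      have hus : u ≤ Real.sqrt (τ * ε) := by
        rw [hudef, mnorm_eq', ← hsqdef]
        exact Real.sqrt_le_sqrt hcase
      have hrτ : τ * r = Real.sqrt (τ * ε) := by
        rw [hrdef,
          show τ * Real.sqrt (ε/τ) = Real.sqrt (τ^2) * Real.sqrt (ε/τ) by
            rw [Real.sqrt_sq hτ.le],
          ← Real.sqrt_mul (sq_nonneg τ), show τ^2 * (ε/τ) = τ * ε by field_simp]
      have hru : sq / (2*τ) ≤ r * u := by
        rw [div_le_iff₀ (by linarith : (0:ℝ) < 2*τ)]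
        nlinarith [husq, hu0, hτ, hus, hrτ, hr0]
      ring_nf at h1 hru ⊢
      linarith [h1, hru]
    · push_neg at hcase
      have hsqpos : 0 < sq := lt_of_le_of_lt (mul_nonneg hτ.le hε) hcase
      have hupos : 0 < u := by
        have : 0 < u^2 := husq ▸ hsqpos
        cases' (lt_or_eq_of_le hu0) with h' h'
        · exact h'
        · exfalso; rw [← h'] at this; simp at this
      by_cases hepos : 0 < ε
      · set s : ℝ := Real.sqrt (τ * ε) with hsdef
        have hspos : 0 < s := Real.sqrt_pos.mpr (mul_pos hτ hepos)
        have hsu : s < u := by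
          have h2 : s^2 < u^2 := by rw [husq, Real.sq_sqrt (mul_nonneg hτ.le hε)]; exact hcase
          nlinarith [hspos, hupos]
        set t : ℝ := s / u with htdef
        have ht0 : 0 < t := div_pos hspos hupos
        have ht1 : t ≤ 1 := le_of_lt ((div_lt_one hupos).mpr hsu)
        have hs2 : s ^ 2 = τ * ε := Real.sq_sqrt (mul_nonneg hτ.le hε)
        have hsr : s * r = ε := by
          rw [hsdef, hrdef, ← Real.sqrt_mul (mul_nonneg hτ.le hε),
            show τ * ε * (ε / τ) = ε ^ 2 by field_simp]
          exact Real.sqrt_sq hε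
        have ht2sq : t^2 * sq = τ * ε := by
          rw [htdef, div_pow, ← husq, div_mul_cancel₀ _ (pow_ne_zero 2 hupos.ne')]
          exact hs2
        have htru : t * (r * u) = ε := by
          rw [htdef, div_mul_eq_mul_div, show s * (r * u) = s * r * u by ring, hsr,
            mul_div_assoc, div_self hupos.ne', mul_one]
        have hH := H t ht0 ht1
        have hdiv : (2*t*D + t^2*sq) / (2*τ) = t * (D/τ) + ε/2 := by
          rw [ht2sq]; field_simp
        rw [hdiv] at hH
        clear_value t
        clear_value s
        have hmul : t * (- D/τ - ε/2 - r*u) ≤ t * ((g w - c ⬝ᵥ w) - (g z - c ⬝ᵥ z)) := by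
          have expand : t * (- D/τ - ε/2 - r*u) = -(t*(D/τ)) - t*(ε/2) - ε := by
            rw [mul_sub, mul_sub, htru]; ring
          rw [expand]
          have hnn : 0 ≤ t*(ε/2) := mul_nonneg ht0.le (by linarith)
          linarith [hH, hnn]
        have := le_of_mul_le_mul_left hmul ht0
        ring_nf at this ⊢
        linarith [this]
      · have heps0 : ε = 0 := le_antisymm (not_lt.mp hepos) hε
        have hr00 : r = 0 := by rw [hrdef, heps0]; simp
        rw [heps0, hr00]
        rw [show -D/τ - (0:ℝ)/2 - 0*u = -D/τ by ring]
        apply le_of_forall_pos_le_add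
        intro η hη
        set t : ℝ := min 1 (2*τ*η/sq) with htdef
        have hq0 : 0 < 2*τ*η/sq := div_pos (by positivity) hsqpos
        have ht0 : 0 < t := lt_min one_pos hq0
        have ht1 : t ≤ 1 := min_le_left _ _
        have htb : t ≤ 2*τ*η/sq := min_le_right _ _
        have hH := H t ht0 ht1
        rw [heps0] at hH
        have h2 : (2*t*D + t^2*sq) / (2*τ) = t * (D/τ) + t * (t * sq / (2*τ)) := by
          field_simp
        rw [h2] at hH
        have h3 : t * sq / (2*τ) ≤ η := by
          rw [div_le_iff₀ (by linarith : (0:ℝ) < 2*τ)]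
          calc t * sq ≤ (2*τ*η/sq) * sq := mul_le_mul_of_nonneg_right htb hsq0
          _ = η * (2*τ) := by field_simp
        clear_value t
        have h4 : t * (- D/τ - η) ≤ t * ((g w - c ⬝ᵥ w) - (g z - c ⬝ᵥ z)) := by
          have h5 := mul_le_mul_of_nonneg_left h3 ht0.le
          have expand : t * (- D/τ - η) = -(t*(D/τ)) - t*η := by ring
          rw [expand]
          linarith [hH, h5]
        have h6 := le_of_mul_le_mul_left h4 ht0
        ring_nf at h6 ⊢
        linarith [h6]
  ring_nf at hmain hbridge ⊢
  linarith [hmain, hbridge]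

set_option maxHeartbeats 1000000 in
lemma per_step' {n m : ℕ}
    (f : (Fin n → ℝ) → ℝ) (g : (Fin m → ℝ) → ℝ)
    (A : Matrix (Fin m) (Fin n) ℝ)
    (S R : Matrix (Fin m) (Fin m) ℝ) (hSt : Sᵀ = S) (hRt : Rᵀ = R)
    (hSpsd : ∀ x, 0 ≤ x ⬝ᵥ S.mulVec x)
    (τk lamk εk δk : ℝ) (hτk : 0 < τk) (hlamk : 0 < lamk)
    (xk xk1 xstar : Fin n → ℝ) (yk1 ybk ybk1 ystar : Fin m → ℝ)
    (I1 : f xstar + A.mulVec xstar ⬝ᵥ yk1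
        ≥ f xk1 + A.mulVec xk1 ⬝ᵥ yk1
          + ((1 / lamk) • (Aᵀ * R * A).mulVec (xk - xk1)) ⬝ᵥ (xstar - xk1) - δk)
    (I2 : Lag f g A xstar ystar ≤ Lag f g A xk1 ystar)
    (I3 : Lag f g A xstar yk1 ≤ Lag f g A xstar ystar)
    (I4 : g ybk1 ≥ g yk1 + ((1 / τk) • S.mulVec (ybk - yk1) + A.mulVec xk) ⬝ᵥ
          (ybk1 - yk1) - εk / 2)
    (I5 : g ystar - A.mulVec xk1 ⬝ᵥ ystar + 1 / (2*τk) * sqnorm S (ystar - ybk)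
      ≥ g ybk1 - A.mulVec xk1 ⬝ᵥ ybk1 + 1 / (2*τk) * sqnorm S (ybk1 - ybk)
        + 1 / (2*τk) * sqnorm S (ystar - ybk1) - εk/2
        - Real.sqrt (εk/τk) * mnorm S (ystar - ybk1))
    (I6 : (A.mulVec (xk - xk1)) ⬝ᵥ (yk1 - ybk1)
        ≤ 1 / (2 * lamk) * ((A.mulVec (xk - xk1)) ⬝ᵥ R.mulVec (A.mulVec (xk - xk1)))
          + 1 / (2 * τk) * ((yk1 - ybk1) ⬝ᵥ S.mulVec (yk1 - ybk1))) :
    1/(2*τk) * sqnorm S (ystar - ybk1) + 1/(2*lamk) * sqnorm R (A.mulVec (xstar - xk1))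
      ≤ 1/(2*τk) * sqnorm S (ystar - ybk) + 1/(2*lamk) * sqnorm R (A.mulVec (xstar - xk))
        + (εk + δk) + Real.sqrt (εk/τk) * mnorm S (ystar - ybk1) := by
  have I7 : 0 ≤ 1/(2*τk) * sqnorm S (yk1 - ybk) :=
    mul_nonneg (by positivity) (hSpsd _)
  have hScomm : ∀ u v : Fin m → ℝ, u ⬝ᵥ S.mulVec v = v ⬝ᵥ S.mulVec u := fun u v => by
    rw [dotProduct_mulVec, dotProduct_comm, ← mulVec_transpose, hSt]
  have hRcomm : ∀ u v : Fin m → ℝ, u ⬝ᵥ R.mulVec v = v ⬝ᵥ R.mulVec u := fun u v => by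
    rw [dotProduct_mulVec, dotProduct_comm, ← mulVec_transpose, hRt]
  have hmvfirst : ∀ (M : Matrix (Fin m) (Fin m) ℝ) (u v : Fin m → ℝ),
      (M.mulVec u) ⬝ᵥ v = v ⬝ᵥ M.mulVec u := fun M u v => dotProduct_comm _ _
  simp only [Lag, sqnorm, traa', mulVec_sub, mulVec_add, sub_dotProduct, add_dotProduct,
    dotProduct_sub, dotProduct_add, smul_dotProduct, dotProduct_smul, smul_eq_mul,
    hmvfirst, hScomm, hRcomm] at I1 I2 I3 I4 I5 I6 I7 ⊢
  ring_nf at I1 I2 I3 I4 I5 I6 I7 ⊢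
  linarith [I1, I2, I3, I4, I5, I6, I7]

set_option maxHeartbeats 1000000 in
/-- Bound (3.10). -/
theorem dual_iterate_bound {n m : ℕ}
    (f : (Fin n → ℝ) → ℝ) (g : (Fin m → ℝ) → ℝ)
    (hf : ConvexOn ℝ Set.univ f) (hg : ConvexOn ℝ Set.univ g)
    (A : Matrix (Fin m) (Fin n) ℝ)
    (S R : Matrix (Fin m) (Fin m) ℝ) (hS : S.PosDef) (hR : R.PosDef)
    (τ lam : ℕ → ℝ) (hτpos : ∀ k, 0 < τ k) (hlampos : ∀ k, 0 < lam k)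
    (hτmono : Monotone τ) (hlammono : Monotone lam)
    (hPD : ∀ k, (R - (τ k * lam k) • S⁻¹).PosDef)
    (ε δ : ℕ → ℝ) (hεnn : ∀ k, 0 ≤ ε k) (hδnn : ∀ k, 0 ≤ δ k)
    (xseq : ℕ → Fin n → ℝ) (yseq ybar : ℕ → Fin m → ℝ)
    (hi : ∀ k, ∀ y, g y ≥ g (yseq (k+1)) +
        ((1 / τ k) • S.mulVec (ybar k - yseq (k+1)) + A.mulVec (xseq k)) ⬝ᵥ
          (y - yseq (k+1)) - ε (k+1) / 2)
    (hii : ∀ k, ∀ x, f x + A.mulVec x ⬝ᵥ yseq (k+1)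
        ≥ f (xseq (k+1)) + A.mulVec (xseq (k+1)) ⬝ᵥ yseq (k+1)
          + ((1 / lam k) • (Aᵀ * R * A).mulVec (xseq k - xseq (k+1))) ⬝ᵥ
              (x - xseq (k+1)) - δ (k+1))
    (hiii : ∀ k, ∀ y, g y - A.mulVec (xseq (k+1)) ⬝ᵥ y
          + (1 / (2 * τ k)) * sqnorm S (y - ybar k)
        ≥ g (ybar (k+1)) - A.mulVec (xseq (k+1)) ⬝ᵥ ybar (k+1)
          + (1 / (2 * τ k)) * sqnorm S (ybar (k+1) - ybar k) - ε (k+1) / 2)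
    (xstar : Fin n → ℝ) (ystar : Fin m → ℝ)
    (hsaddle : IsSaddle f g A xstar ystar) :
    ∀ N : ℕ, 1 ≤ N → ∀ k ≤ N,
      mnorm S (ystar - ybar k)
        ≤ 2 * (τ N * ∑ j ∈ Finset.range N, Real.sqrt (ε (j+1) / τ j))
          + Real.sqrt (τ N / τ 0) * mnorm S (ystar - ybar 0)
          + Real.sqrt (τ N / lam 0) * mnorm R (A.mulVec (xstar - xseq 0))
          + Real.sqrt (2 * (τ N * ∑ j ∈ Finset.range N, (2 * ε (j+1) + δ (j+1)))) := by
  intro N hN k hkN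
  have hSt : Sᵀ = S := hS.1
  have hRt : Rᵀ = R := hR.1
  have hSpsd : ∀ x, 0 ≤ x ⬝ᵥ S.mulVec x := fun x => hS.posSemidef.dotProduct_mulVec_nonneg x
  have hRpsd : ∀ x, 0 ≤ x ⬝ᵥ R.mulVec x := fun x => hR.posSemidef.dotProduct_mulVec_nonneg x
  set uu : ℕ → ℝ := fun j => mnorm S (ystar - ybar j) with huu
  set Φ : ℕ → ℝ := fun j => 1/(2*τ j) * sqnorm S (ystar - ybar j)
      + 1/(2*lam j) * sqnorm R (A.mulVec (xstar - xseq j)) with hΦ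
  have hsqnn : ∀ j, 0 ≤ sqnorm S (ystar - ybar j) := fun j => hSpsd _
  have hΦnn : ∀ j, 0 ≤ Φ j := fun j => by
    have h1 := hτpos j; have h2 := hlampos j
    exact add_nonneg (mul_nonneg (le_of_lt (one_div_pos.mpr (by linarith))) (hSpsd _))
      (mul_nonneg (le_of_lt (one_div_pos.mpr (by linarith))) (hRpsd _))
  have huunn : ∀ j, 0 ≤ uu j := fun j => Real.sqrt_nonneg _
  have husq : ∀ j, (uu j)^2 = sqnorm S (ystar - ybar j) := fun j => Real.sq_sqrt (hsqnn j)
  -- per-step inequality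
  have per : ∀ j, 1/(2*τ j) * sqnorm S (ystar - ybar (j+1))
        + 1/(2*lam j) * sqnorm R (A.mulVec (xstar - xseq (j+1)))
      ≤ Φ j + (ε (j+1) + δ (j+1)) + Real.sqrt (ε (j+1)/τ j) * uu (j+1) := by
    intro j
    exact per_step' f g A S R hSt hRt hSpsd (τ j) (lam j) (ε (j+1)) (δ (j+1))
      (hτpos j) (hlampos j) (xseq j) (xseq (j+1)) xstar (yseq (j+1)) (ybar j)
      (ybar (j+1)) ystar
      (hii j xstar)
      ((hsaddle (xseq (j+1)) ystar).2)
      ((hsaddle xstar (yseq (j+1))).1)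
      (hi j (ybar (j+1)))
      (strong_min' hg hSt hSpsd (hτpos j) (hεnn (j+1)) (A.mulVec (xseq (j+1)))
        (ybar j) (ybar (j+1)) ystar (hiii j))
      (amgm' hS (hτpos j) (hlampos j) (hPD j) _ _)
  -- Φ (j+1) ≤ LHS of per j
  have mono : ∀ j, Φ (j+1) ≤ 1/(2*τ j) * sqnorm S (ystar - ybar (j+1))
        + 1/(2*lam j) * sqnorm R (A.mulVec (xstar - xseq (j+1))) := by
    intro j
    have h1 : 1/(2*τ (j+1)) ≤ 1/(2*τ j) := by
      apply one_div_le_one_div_of_le (by linarith [hτpos j])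
      have := hτmono (Nat.le_succ j); linarith
    have h2 : 1/(2*lam (j+1)) ≤ 1/(2*lam j) := by
      apply one_div_le_one_div_of_le (by linarith [hlampos j])
      have := hlammono (Nat.le_succ j); linarith
    exact add_le_add (mul_le_mul_of_nonneg_right h1 (hSpsd _))
      (mul_le_mul_of_nonneg_right h2 (hRpsd _))
  -- telescoping
  have teles : ∀ j, Φ j ≤ Φ 0 + (∑ i ∈ Finset.range j, (ε (i+1) + δ (i+1)))
      + ∑ i ∈ Finset.range j, Real.sqrt (ε (i+1)/τ i) * uu (i+1) := by
    intro j
    induction j with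
    | zero => simp
    | succ j ih =>
      have h := le_trans (mono j) (per j)
      rw [Finset.sum_range_succ, Finset.sum_range_succ]
      linarith [ih, h]
  -- squared bound, uniform in k ≤ N
  have hbk : ∀ k', k' ≤ N → (uu k')^2 ≤
      (2*τ N*Φ 0 + ∑ i ∈ Finset.range N, 2*τ N*(ε (i+1) + δ (i+1)))
      + ∑ i ∈ Finset.range N, 2*τ N*(Real.sqrt (ε (i+1)/τ i) * uu (i+1)) := by
    intro k' hk'
    have hτk' : τ k' ≤ τ N := hτmono hk'
    have h1 : (uu k')^2 ≤ 2*τ N * Φ k' := by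
      rw [husq k']
      have hτk0 := hτpos k'
      have hlamk0 := hlampos k'
      have e1 : 1/(2*τ k') * sqnorm S (ystar - ybar k') ≤ Φ k' := by
        have hrt : (0:ℝ) ≤ 1/(2*lam k') * sqnorm R (A.mulVec (xstar - xseq k')) :=
          mul_nonneg (le_of_lt (one_div_pos.mpr (by linarith))) (hRpsd _)
        simp only [hΦ]
        linarith [hrt]
      have hne : τ k' ≠ 0 := hτk0.ne'
      have e2 : 2*τ k' * (1/(2*τ k') * sqnorm S (ystar - ybar k'))
          = sqnorm S (ystar - ybar k') := by
        field_simp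
      calc sqnorm S (ystar - ybar k')
          = 2*τ k' * (1/(2*τ k') * sqnorm S (ystar - ybar k')) := e2.symm
        _ ≤ 2*τ k' * Φ k' := mul_le_mul_of_nonneg_left e1 (by linarith)
        _ ≤ 2*τ N * Φ k' := mul_le_mul_of_nonneg_right (by linarith) (hΦnn k')
    have h2 : Φ k' ≤ Φ 0 + (∑ i ∈ Finset.range N, (ε (i+1) + δ (i+1)))
        + ∑ i ∈ Finset.range N, Real.sqrt (ε (i+1)/τ i) * uu (i+1) := by
      have hsub : Finset.range k' ⊆ Finset.range N := Finset.range_subset_range.mpr hk'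
      have e3 : (∑ i ∈ Finset.range k', (ε (i+1) + δ (i+1)))
          ≤ ∑ i ∈ Finset.range N, (ε (i+1) + δ (i+1)) := by
        apply Finset.sum_le_sum_of_subset_of_nonneg hsub
        intro i _ _
        have := hεnn (i+1); have := hδnn (i+1); linarith
      have e4 : (∑ i ∈ Finset.range k', Real.sqrt (ε (i+1)/τ i) * uu (i+1))
          ≤ ∑ i ∈ Finset.range N, Real.sqrt (ε (i+1)/τ i) * uu (i+1) := by
        apply Finset.sum_le_sum_of_subset_of_nonneg hsub
        intro i _ _
        exact mul_nonneg (Real.sqrt_nonneg _) (huunn (i+1))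
      linarith [teles k']
    have h3 : 2*τ N * Φ k' ≤ 2*τ N * (Φ 0 + (∑ i ∈ Finset.range N, (ε (i+1) + δ (i+1)))
        + ∑ i ∈ Finset.range N, Real.sqrt (ε (i+1)/τ i) * uu (i+1)) := by
      apply mul_le_mul_of_nonneg_left h2 (by linarith [hτpos N])
    have h4 : 2*τ N * (Φ 0 + (∑ i ∈ Finset.range N, (ε (i+1) + δ (i+1)))
        + ∑ i ∈ Finset.range N, Real.sqrt (ε (i+1)/τ i) * uu (i+1))
        = (2*τ N*Φ 0 + ∑ i ∈ Finset.range N, 2*τ N*(ε (i+1) + δ (i+1)))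
          + ∑ i ∈ Finset.range N, 2*τ N*(Real.sqrt (ε (i+1)/τ i) * uu (i+1)) := by
      rw [mul_add, mul_add, Finset.mul_sum, Finset.mul_sum]
    exact le_trans h1 (le_trans h3 (le_of_eq h4))
  -- Gronwall via the max
  obtain ⟨k0, hk0mem, hk0max⟩ :=
    Finset.exists_max_image (Finset.range (N+1)) uu ⟨0, by simp⟩
  have hk0N : k0 ≤ N := Nat.lt_succ_iff.mp (Finset.mem_range.mp hk0mem)
  set C2 : ℝ := 2*τ N*Φ 0 + ∑ i ∈ Finset.range N, 2*τ N*(ε (i+1) + δ (i+1)) with hC2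
  set Sa : ℝ := ∑ i ∈ Finset.range N, 2*τ N*Real.sqrt (ε (i+1)/τ i) with hSa
  have hC2nn : 0 ≤ C2 := by
    have h5 : 0 ≤ ∑ i ∈ Finset.range N, 2*τ N*(ε (i+1) + δ (i+1)) := by
      apply Finset.sum_nonneg; intro i _
      have := hεnn (i+1); have := hδnn (i+1); have := hτpos N
      nlinarith
    have h6 := hΦnn 0; have h7 := hτpos N
    have h8 : (0:ℝ) ≤ 2*τ N := by linarith
    rw [hC2]
    have := mul_nonneg h8 h6
    linarith
  have hSann : 0 ≤ Sa := by
    apply Finset.sum_nonneg; intro i _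
    have h6 := hτpos N
    have h7 : (0:ℝ) ≤ Real.sqrt (ε (i+1)/τ i) := Real.sqrt_nonneg _
    nlinarith
  have hMx2 : (uu k0)^2 ≤ C2 + Sa * uu k0 := by
    have h1 := hbk k0 hk0N
    have h2 : (∑ i ∈ Finset.range N, 2*τ N*(Real.sqrt (ε (i+1)/τ i) * uu (i+1)))
        ≤ Sa * uu k0 := by
      rw [hSa, Finset.sum_mul]
      apply Finset.sum_le_sum
      intro i hi'
      have himem : i + 1 ∈ Finset.range (N+1) := by
        rw [Finset.mem_range] at hi' ⊢; omega
      have h8 := hk0max (i+1) himem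
      have h6 := hτpos N
      have h7 : (0:ℝ) ≤ Real.sqrt (ε (i+1)/τ i) := Real.sqrt_nonneg _
      have h9 : 2*τ N*Real.sqrt (ε (i+1)/τ i) * uu (i+1)
          ≤ 2*τ N*Real.sqrt (ε (i+1)/τ i) * uu k0 := by
        apply mul_le_mul_of_nonneg_left h8
        nlinarith
      calc 2*τ N*(Real.sqrt (ε (i+1)/τ i) * uu (i+1))
          = 2*τ N*Real.sqrt (ε (i+1)/τ i) * uu (i+1) := by ring
        _ ≤ 2*τ N*Real.sqrt (ε (i+1)/τ i) * uu k0 := h9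
    linarith [h1, h2]
  set c : ℝ := Real.sqrt C2 with hcdef
  have hc0 : 0 ≤ c := Real.sqrt_nonneg _
  have hc2 : c^2 = C2 := Real.sq_sqrt hC2nn
  have hG : uu k0 ≤ Sa + c := by
    by_contra hcon
    push_neg at hcon
    have hMx0 : 0 ≤ uu k0 := huunn k0
    have hupos : 0 < uu k0 := lt_of_le_of_lt (by linarith) hcon
    have hcu : c ≤ uu k0 := by linarith
    have e1 : c * c ≤ c * uu k0 := mul_le_mul_of_nonneg_left hcu hc0
    have e2 : (Sa + c) * uu k0 < uu k0 * uu k0 := mul_lt_mul_of_pos_right hcon hupos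
    nlinarith [hMx2, hc2, e1, e2]
  have hout : uu k ≤ uu k0 := hk0max k (Finset.mem_range.mpr (Nat.lt_succ_of_le hkN))
  -- convert Sa and c to the goal's form
  have hSaeq : Sa = 2 * (τ N * ∑ j ∈ Finset.range N, Real.sqrt (ε (j+1) / τ j)) := by
    rw [hSa, Finset.mul_sum, Finset.mul_sum]
    exact Finset.sum_congr rfl (fun i _ => by ring)
  set T1 : ℝ := (τ N / τ 0) * sqnorm S (ystar - ybar 0) with hT1
  set T2 : ℝ := (τ N / lam 0) * sqnorm R (A.mulVec (xstar - xseq 0)) with hT2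
  set T3 : ℝ := 2 * (τ N * ∑ j ∈ Finset.range N, (2 * ε (j+1) + δ (j+1))) with hT3
  have hT1nn : 0 ≤ T1 :=
    mul_nonneg (div_nonneg (hτpos N).le (hτpos 0).le) (hSpsd _)
  have hT2nn : 0 ≤ T2 :=
    mul_nonneg (div_nonneg (hτpos N).le (hlampos 0).le) (hRpsd _)
  have hT3nn : 0 ≤ T3 := by
    have h6 := hτpos N
    have h5 : 0 ≤ ∑ j ∈ Finset.range N, (2 * ε (j+1) + δ (j+1)) := by
      apply Finset.sum_nonneg; intro i _
      have := hεnn (i+1); have := hδnn (i+1); linarith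
    have : 0 ≤ τ N * ∑ j ∈ Finset.range N, (2 * ε (j+1) + δ (j+1)) := mul_nonneg h6.le h5
    rw [hT3]; linarith
  have hC2le : C2 ≤ T1 + T2 + T3 := by
    have e1 : 2*τ N*Φ 0 = T1 + T2 := by
      rw [hΦ, hT1, hT2]
      have h0τ := (hτpos 0).ne'
      have h0lam := (hlampos 0).ne'
      field_simp
    have e2 : (∑ i ∈ Finset.range N, 2*τ N*(ε (i+1) + δ (i+1))) ≤ T3 := by
      have e2a : T3 = ∑ j ∈ Finset.range N, 2*τ N*(2 * ε (j+1) + δ (j+1)) := by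
        rw [hT3, Finset.mul_sum, Finset.mul_sum]
        exact Finset.sum_congr rfl (fun i _ => by ring)
      rw [e2a]
      apply Finset.sum_le_sum
      intro i _
      have := hεnn (i+1); have h6 := hτpos N
      nlinarith
    rw [hC2]; linarith
  have hcle : c ≤ Real.sqrt T1 + Real.sqrt T2 + Real.sqrt T3 := by
    calc c ≤ Real.sqrt (T1 + T2 + T3) := Real.sqrt_le_sqrt hC2le
      _ ≤ Real.sqrt (T1 + T2) + Real.sqrt T3 := sqrt_add_le' (by linarith) hT3nn
      _ ≤ Real.sqrt T1 + Real.sqrt T2 + Real.sqrt T3 := by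
          have := sqrt_add_le' hT1nn hT2nn; linarith
  have hsT1 : Real.sqrt T1 = Real.sqrt (τ N / τ 0) * mnorm S (ystar - ybar 0) := by
    rw [hT1, Real.sqrt_mul (div_nonneg (hτpos N).le (hτpos 0).le), mnorm_eq']
  have hsT2 : Real.sqrt T2 = Real.sqrt (τ N / lam 0) * mnorm R (A.mulVec (xstar - xseq 0)) := by
    rw [hT2, Real.sqrt_mul (div_nonneg (hτpos N).le (hlampos 0).le), mnorm_eq']
  have hfinal : uu k ≤ 2 * (τ N * ∑ j ∈ Finset.range N, Real.sqrt (ε (j+1) / τ j))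
      + Real.sqrt (τ N / τ 0) * mnorm S (ystar - ybar 0)
      + Real.sqrt (τ N / lam 0) * mnorm R (A.mulVec (xstar - xseq 0))
      + Real.sqrt T3 := by
    calc uu k ≤ uu k0 := hout
      _ ≤ Sa + c := hG
      _ ≤ _ := by rw [hSaeq]; linarith [hcle, hsT1.le, hsT1.ge, hsT2.le, hsT2.ge]
  exact hfinal
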